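/- Let p > 3 be a prime and n, k integers coprime to p. Let χ_L be the Legendre symbol character mod p. Then ∑_{m=1}^{p-1} χ_L(m)·|∑_{a=1}^{p-1} χ₀(m·a + n·ā)·e(k·a/p)|² = χ_L(-n·k²)·(p - 4). -/

import Mathlib

open Finset Complex

/-- `e p x = e^{2πi x/p}` for `x : ZMod p`. -/
noncomputable def e (p : ℕ) [NeZero p] (x : ZMod p) : ℂ :=
  Complex.exp (2 * Real.pi * Complex.I * x.val / p)

/-- Gauss sum `τ(f) = ∑_{a mod p} f(a) e^{2πia/p}` associated to `f : ZMod p → ℂ`. -/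
noncomputable def gaussSum' (p : ℕ) [NeZero p] (f : ZMod p → ℂ) : ℂ :=
  ∑ a : ZMod p, f a * e p a

/-- The Legendre symbol character mod `p`, with complex values. -/
noncomputable def legChar (p : ℕ) [Fact p.Prime] : DirichletCharacter ℂ p :=
  (quadraticChar (ZMod p)).ringHomComp (Int.castRingHom ℂ)

section Aux

variable (p : ℕ) [NeZero p]

lemma e_eq_stdAddChar (x : ZMod p) : e p x = ZMod.stdAddChar x := by
  rw [ZMod.stdAddChar_apply, ZMod.toCircle_apply, e]

lemma e_zero : e p 0 = 1 := by
  rw [e_eq_stdAddChar]; exact AddChar.map_zero_eq_one _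

lemma e_add (x y : ZMod p) : e p (x + y) = e p x * e p y := by
  rw [e_eq_stdAddChar, e_eq_stdAddChar, e_eq_stdAddChar]
  exact AddChar.map_add_eq_mul _ _ _

lemma e_conj (x : ZMod p) : (starRingEnd ℂ) (e p x) = e p (-x) := by
  rw [e_eq_stdAddChar, e_eq_stdAddChar, ZMod.stdAddChar_apply, ZMod.stdAddChar_apply,
    AddChar.map_neg_eq_inv]
  exact (Circle.coe_inv_eq_conj _).symm

lemma e_sum_mul (c : ZMod p) (hc : c ≠ 0) : ∑ x : ZMod p, e p (c * x) = 0 := by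
  simp only [e_eq_stdAddChar]
  simpa only [AddChar.mulShift_apply] using
    AddChar.sum_eq_zero_of_ne_one (ZMod.isPrimitive_stdAddChar p hc)

lemma e_sum_mul' (c : ZMod p) (hc : c ≠ 0) :
    ∑ x ∈ univ.filter (fun x : ZMod p => x ≠ 0), e p (c * x) = -1 := by
  classical
  have h := e_sum_mul p c hc
  rw [show (univ.filter (fun x : ZMod p => x ≠ 0)) = univ.erase 0 from Finset.filter_ne' _ _,
    Finset.sum_erase_eq_sub (Finset.mem_univ 0), h, mul_zero, e_zero]
  ring

end Aux

section LegAux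

variable {p : ℕ} [Fact p.Prime]

lemma legChar_apply (x : ZMod p) : legChar p x = ((quadraticChar (ZMod p) x : ℤ) : ℂ) := rfl

lemma legChar_sq (x : ZMod p) (hx : x ≠ 0) : legChar p (x * x) = 1 := by
  rw [legChar_apply, ← pow_two, quadraticChar_sq_one' hx]
  norm_num

lemma legChar_zero : legChar p (0 : ZMod p) = 0 := by
  rw [legChar_apply, quadraticChar_zero]
  norm_num

lemma legChar_sum (hp : 3 < p) :
    ∑ m ∈ univ.filter (fun m : ZMod p => m ≠ 0), legChar p m = 0 := by
  classical
  have hchar : ringChar (ZMod p) ≠ 2 := by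
    rw [ZMod.ringChar_zmod_n]; omega
  have h := quadraticChar_sum_zero hchar
  have h2 : ∑ m : ZMod p, legChar p m = 0 := by
    simp only [legChar_apply]
    rw [← Int.cast_sum, h]
    norm_num
  rw [show (univ.filter (fun x : ZMod p => x ≠ 0)) = univ.erase 0 from Finset.filter_ne' _ _,
    Finset.sum_erase_eq_sub (Finset.mem_univ 0), h2, legChar_zero, sub_zero]

lemma key_m (hp : 3 < p) (w : ZMod p) (hw : w ≠ 0) (a b : ZMod p) (ha : a ≠ 0) (hb : b ≠ 0) :
    ∑ m ∈ univ.filter (fun m : ZMod p => m ≠ 0),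
      legChar p m * ((if m * a + w * a⁻¹ = 0 then (0 : ℂ) else 1) *
        (if m * b + w * b⁻¹ = 0 then (0 : ℂ) else 1))
      = legChar p (-w) * ((if a = b ∨ a = -b then (1 : ℂ) else 0) - 2) := by
  classical
  have hcond : ∀ (c : ZMod p), c ≠ 0 → ∀ m : ZMod p,
      (m * c + w * c⁻¹ = 0) ↔ m = -w * (c⁻¹ * c⁻¹) := by
    intro c hc m
    rw [show m * c + w * c⁻¹ = (m - -w * (c⁻¹ * c⁻¹)) * c by field_simp; ring,
      mul_eq_zero, sub_eq_zero]
    simp [hc]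
  set A : ZMod p := -w * (a⁻¹ * a⁻¹) with hA
  set B : ZMod p := -w * (b⁻¹ * b⁻¹) with hB
  have hA0 : A ≠ 0 := mul_ne_zero (neg_ne_zero.mpr hw) (mul_ne_zero (inv_ne_zero ha) (inv_ne_zero ha))
  have hB0 : B ≠ 0 := mul_ne_zero (neg_ne_zero.mpr hw) (mul_ne_zero (inv_ne_zero hb) (inv_ne_zero hb))
  have hχA : legChar p A = legChar p (-w) := by
    rw [hA, map_mul, legChar_sq _ (inv_ne_zero ha), mul_one]
  have hχB : legChar p B = legChar p (-w) := by
    rw [hB, map_mul, legChar_sq _ (inv_ne_zero hb), mul_one]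
  have hABiff : A = B ↔ (a = b ∨ a = -b) := by
    rw [hA, hB, mul_right_inj' (neg_ne_zero.mpr hw), mul_self_eq_mul_self_iff, ← inv_neg,
      inv_inj, inv_inj]
  have hpt : ∀ m : ZMod p,
      legChar p m * ((if m = A then (0 : ℂ) else 1) * (if m = B then (0 : ℂ) else 1))
        = legChar p m - (if m = A then legChar p m else 0) - (if m = B then legChar p m else 0)
          + (if m = A ∧ m = B then legChar p m else 0) := by
    intro m
    by_cases h1 : m = A <;> by_cases h2 : m = B <;> simp [h1, h2] <;> ring
  simp only [hcond a ha, hcond b hb]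
  rw [Finset.sum_congr rfl fun m _ => hpt m, Finset.sum_add_distrib, Finset.sum_sub_distrib,
    Finset.sum_sub_distrib, legChar_sum hp]
  rw [Finset.sum_ite_eq' _ A (fun m => legChar p m),
    Finset.sum_ite_eq' _ B (fun m => legChar p m),
    if_pos (by simp [hA0]), if_pos (by simp [hB0])]
  have h3 : ∑ m ∈ univ.filter (fun m : ZMod p => m ≠ 0), (if m = A ∧ m = B then legChar p m else 0)
      = if A = B then legChar p A else 0 := by
    split_ifs with hAB
    · rw [← hAB]
      simp only [and_self]
      rw [Finset.sum_ite_eq' _ A (fun m => legChar p m), if_pos (by simp [hA0])]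
    · apply Finset.sum_eq_zero
      intro m _
      rw [if_neg]
      rintro ⟨rfl, h⟩
      exact hAB h
  rw [h3, hχA, hχB, if_congr hABiff rfl rfl]
  split_ifs <;> ring

end LegAux

theorem stmt_9 (p : ℕ) [Fact p.Prime] (hp : 3 < p) (n k : ℤ)
    (hn : IsCoprime n (p : ℤ)) (hk : IsCoprime k (p : ℤ)) :
    ∑ m ∈ univ.filter (fun m : ZMod p => m ≠ 0),
      legChar p m * (‖(∑ a ∈ univ.filter (fun a : ZMod p => a ≠ 0),
        (1 : DirichletCharacter ℂ p) ((m : ZMod p) * a + (n : ZMod p) * a⁻¹)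
          * e p ((k : ZMod p) * a))‖) ^ 2
      = legChar p ((-n * k ^ 2 : ℤ) : ZMod p) * (p - 4) := by
  classical
  set s : Finset (ZMod p) := univ.filter (fun x : ZMod p => x ≠ 0) with hs
  set n' : ZMod p := (n : ZMod p) with hn'
  set k' : ZMod p := (k : ZMod p) with hk'
  have hpu : ¬ IsUnit ((p : ℕ) : ℤ) := by
    rw [Int.isUnit_iff]
    omega
  have hn0 : n' ≠ 0 := by
    intro h
    rw [hn', ZMod.intCast_zmod_eq_zero_iff_dvd] at h
    exact hpu (hn.isUnit_of_dvd' h dvd_rfl)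
  have hk0 : k' ≠ 0 := by
    intro h
    rw [hk', ZMod.intCast_zmod_eq_zero_iff_dvd] at h
    exact hpu (hk.isUnit_of_dvd' h dvd_rfl)
  have h2 : (2 : ZMod p) ≠ 0 := by
    intro h
    rw [show (2 : ZMod p) = ((2 : ℕ) : ZMod p) by norm_cast,
      ZMod.natCast_eq_zero_iff] at h
    have := Nat.le_of_dvd (by norm_num) h
    omega
  have hone : ∀ x : ZMod p, (1 : DirichletCharacter ℂ p) x = if x = 0 then (0 : ℂ) else 1 := by
    intro x
    split_ifs with h
    · rw [h]; exact MulChar.map_zero _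
    · exact MulChar.one_apply (isUnit_iff_ne_zero.mpr h)
  have habs : ∀ z : ℂ, ((‖z‖ : ℂ)) ^ 2 = z * (starRingEnd ℂ) z := by
    intro z
    rw [Complex.mul_conj]
    norm_cast
    exact Complex.sq_norm z
  have hSconj : ∀ m : ZMod p,
      (starRingEnd ℂ) (∑ b ∈ s, (if m * b + n' * b⁻¹ = 0 then (0 : ℂ) else 1) * e p (k' * b))
      = ∑ b ∈ s, (if m * b + n' * b⁻¹ = 0 then (0 : ℂ) else 1) * e p (-(k' * b)) := by
    intro m
    rw [map_sum]
    refine Finset.sum_congr rfl fun b _ => ?_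
    rw [map_mul, e_conj, apply_ite (starRingEnd ℂ), map_zero, map_one]
  have hmem : ∀ x : ZMod p, x ∈ s ↔ x ≠ 0 := by
    intro x; simp [hs]
  have ha1 : ∑ a ∈ s, e p (k' * a) = -1 := e_sum_mul' p k' hk0
  have hb2 : ∑ b ∈ s, e p (-(k' * b)) = -1 := by
    have := e_sum_mul' p (-k') (neg_ne_zero.mpr hk0)
    simpa only [neg_mul] using this
  have ha2 : ∑ a ∈ s, e p (2 * k' * a) = -1 := by
    have := e_sum_mul' p (2 * k') (mul_ne_zero h2 hk0)
    simpa using this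
  have hcard : ∑ a ∈ s, (1 : ℂ) = (p : ℂ) - 1 := by
    rw [Finset.sum_const, nsmul_eq_mul, mul_one]
    have hc : s.card = p - 1 := by
      rw [hs, Finset.filter_ne', Finset.card_erase_of_mem (Finset.mem_univ 0),
        Finset.card_univ, ZMod.card]
    rw [hc, Nat.cast_sub (by omega)]
    norm_num
  have hpair : ∀ (a : ZMod p) (f : ZMod p → ℂ), a ≠ 0 →
      ∑ b ∈ s, (if b = a ∨ b = -a then f b else 0) = f a + f (-a) := by
    intro a f ha
    have hane : a ≠ -a := by
      intro h
      apply ha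
      have h2a : (2 : ZMod p) * a = 0 := by
        rw [two_mul]
        nth_rewrite 2 [h]
        ring
      rcases mul_eq_zero.mp h2a with h' | h'
      · exact absurd h' h2
      · exact h'
    have hsub : ({a, -a} : Finset (ZMod p)) ⊆ s := by
      intro x hx
      rw [hmem]
      rcases Finset.mem_insert.mp hx with rfl | hx
      · exact ha
      · rw [Finset.mem_singleton.mp hx]
        exact neg_ne_zero.mpr ha
    calc ∑ b ∈ s, (if b = a ∨ b = -a then f b else 0)
        = ∑ b ∈ s, (if b ∈ ({a, -a} : Finset (ZMod p)) then f b else 0) := by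
          refine Finset.sum_congr rfl fun b _ => ?_
          simp [Finset.mem_insert]
      _ = ∑ b ∈ s ∩ {a, -a}, f b := Finset.sum_ite_mem _ _ _
      _ = ∑ b ∈ ({a, -a} : Finset (ZMod p)), f b := by
          rw [Finset.inter_eq_right.mpr hsub]
      _ = f a + f (-a) := Finset.sum_pair hane
  have hRHS : legChar p ((-n * k ^ 2 : ℤ) : ZMod p) = legChar p (-n') := by
    have hcast : ((-n * k ^ 2 : ℤ) : ZMod p) = -n' * (k' * k') := by
      push_cast
      ring
    rw [hcast, map_mul, legChar_sq _ hk0, mul_one]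
  rw [hRHS]
  simp only [hone]
  calc ∑ m ∈ s, legChar p m * ((‖(∑ a ∈ s,
          (if m * a + n' * a⁻¹ = 0 then (0 : ℂ) else 1) * e p (k' * a))‖ : ℂ)) ^ 2
      = ∑ m ∈ s, ∑ a ∈ s, ∑ b ∈ s, (e p (k' * a) * e p (-(k' * b))) *
          (legChar p m * ((if m * a + n' * a⁻¹ = 0 then (0 : ℂ) else 1) *
            (if m * b + n' * b⁻¹ = 0 then (0 : ℂ) else 1))) := by
        refine Finset.sum_congr rfl fun m hm => ?_
        rw [habs, hSconj m, Finset.sum_mul_sum, Finset.mul_sum]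
        refine Finset.sum_congr rfl fun a _ => ?_
        rw [Finset.mul_sum]
        refine Finset.sum_congr rfl fun b _ => ?_
        ring
    _ = ∑ a ∈ s, ∑ b ∈ s, (e p (k' * a) * e p (-(k' * b))) *
          (∑ m ∈ s, legChar p m * ((if m * a + n' * a⁻¹ = 0 then (0 : ℂ) else 1) *
            (if m * b + n' * b⁻¹ = 0 then (0 : ℂ) else 1))) := by
        rw [Finset.sum_comm]
        refine Finset.sum_congr rfl fun a _ => ?_
        rw [Finset.sum_comm]
        refine Finset.sum_congr rfl fun b _ => ?_
        rw [Finset.mul_sum]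
    _ = ∑ a ∈ s, ∑ b ∈ s, (e p (k' * a) * e p (-(k' * b))) *
          (legChar p (-n') * ((if a = b ∨ a = -b then (1 : ℂ) else 0) - 2)) := by
        refine Finset.sum_congr rfl fun a ha => ?_
        refine Finset.sum_congr rfl fun b hb => ?_
        rw [key_m hp n' hn0 a b ((hmem a).mp ha) ((hmem b).mp hb)]
    _ = ∑ a ∈ s, legChar p (-n') * ((1 + e p (2 * k' * a)) + 2 * e p (k' * a)) := by
        refine Finset.sum_congr rfl fun a ha => ?_
        have ha0 : a ≠ 0 := (hmem a).mp ha
        have hb1 : ∑ b ∈ s, (if b = a ∨ b = -a then e p (k' * a) * e p (-(k' * b)) else 0)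
            = 1 + e p (2 * k' * a) := by
          rw [hpair a (fun b => e p (k' * a) * e p (-(k' * b))) ha0]
          rw [← e_add, add_neg_cancel, e_zero]
          congr 1
          rw [mul_neg, neg_neg, ← e_add]
          congr 1
          ring
        have hptb : ∀ b : ZMod p, (e p (k' * a) * e p (-(k' * b))) *
              (legChar p (-n') * ((if a = b ∨ a = -b then (1 : ℂ) else 0) - 2))
            = legChar p (-n') * (if b = a ∨ b = -a then e p (k' * a) * e p (-(k' * b)) else 0)
              - (legChar p (-n') * 2 * e p (k' * a)) * e p (-(k' * b)) := by
          intro b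
          have hcondeq : (a = b ∨ a = -b) ↔ (b = a ∨ b = -a) := by
            constructor
            · rintro (rfl | rfl)
              · left; rfl
              · right; rw [neg_neg]
            · rintro (rfl | rfl)
              · left; rfl
              · right; rw [neg_neg]
          rw [if_congr hcondeq rfl rfl]
          split_ifs <;> ring
        rw [Finset.sum_congr rfl fun b _ => hptb b, Finset.sum_sub_distrib,
          ← Finset.mul_sum, ← Finset.mul_sum, hb1, hb2]
        ring
    _ = legChar p (-n') * ((p : ℂ) - 4) := by
        have hpt : ∀ a : ZMod p, legChar p (-n') * ((1 + e p (2 * k' * a)) + 2 * e p (k' * a))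
            = legChar p (-n') * 1 + legChar p (-n') * e p (2 * k' * a)
              + (legChar p (-n') * 2) * e p (k' * a) := fun a => by ring
        rw [Finset.sum_congr rfl fun a _ => hpt a, Finset.sum_add_distrib,
          Finset.sum_add_distrib, ← Finset.mul_sum, ← Finset.mul_sum, ← Finset.mul_sum,
          hcard, ha1, ha2]
        ring
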